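/- Let N be an odd squarefree positive integer, let ℓ be a divisor of N with ℓ > 1, let m be a divisor of N, and set ε := (−1)^((ℓ−1)/2). Let n > 0 be an integer such that −εn = D_{ℓ,n}·f_n² and −ℓn = D′_{ℓ,n}·(f′_n)² with D_{ℓ,n}, D′_{ℓ,n} fundamental discriminants. Define, for a prime p, A_p(ℓ,n) := f_p·(1 − (D′_{ℓ,n}/p)/p)/(1 − p^{−2}), C_p(ℓ,n) := 1 − (D′_{ℓ,n}/p), and D_p(ℓ,n) := σ₁(f_p) − σ₁(f_p/p)·(D_{ℓ,n}/p)·(p/ℓ), where σ₁(f_p/p) := 0 if p ∤ f_p. Then H(ℓ,m,N;n) = L(0,χ_{D′_{ℓ,n}}) · (∏_{p prime, p | f_n, p ∤ N} D_p(ℓ,n)) · (∏_{p prime, p | m} C_p(ℓ,n)) · (∏_{p prime, p | N/m} A_p(ℓ,n)) · (gcd(ℓ, D_{ℓ,n})/gcd(ℓ, D_{ℓ,n}, m)). -/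

import Mathlib

open scoped BigOperators

/-- The Kronecker symbol `(D/p)` at a prime `p`. -/
def kronP (D : ℤ) (p : ℕ) : ℤ :=
  if p = 2 then
    if D % 2 = 0 then 0 else if D % 8 = 1 ∨ D % 8 = 7 then 1 else -1
  else jacobiSym D p

/-- The Kronecker symbol `(D/m)` for positive `m`: the completely multiplicative
function of `m` determined by its values at primes. -/
def kron (D : ℤ) (m : ℕ) : ℤ :=
  m.factorization.prod fun p k => kronP D p ^ k

/-- Fundamental discriminant: `1`, or squarefree `≡ 1 (mod 4)`, or `4k` with
`k ≡ 2, 3 (mod 4)` squarefree. -/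
def IsFundDisc (D : ℤ) : Prop :=
  D = 1 ∨ (D % 4 = 1 ∧ Squarefree D) ∨
    ∃ k : ℤ, D = 4 * k ∧ (k % 4 = 2 ∨ k % 4 = 3) ∧ Squarefree k

/-- The decomposition `a = D·f²` with `D` a fundamental discriminant, `f ≥ 1`. -/
noncomputable def fdpair (a : ℤ) : ℤ × ℕ := by
  classical
  exact if h : ∃ p : ℤ × ℕ, IsFundDisc p.1 ∧ 1 ≤ p.2 ∧ a = p.1 * (p.2 : ℤ) ^ 2
    then h.choose else (0, 0)

/-- `D_n`, the fundamental discriminant with `-n = D_n · f_n²`. -/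
noncomputable def Dn (n : ℕ) : ℤ := (fdpair (-(n : ℤ))).1

/-- `f_n`, the conductor with `-n = D_n · f_n²`. -/
noncomputable def fn (n : ℕ) : ℕ := (fdpair (-(n : ℤ))).2

/-- `f_p := p^(v_p f)`, the `p`-part of `f`. -/
def ppart (f p : ℕ) : ℕ := p ^ f.factorization p

/-- The weight `w(a,b,c)` in the definition of the Hurwitz class number. -/
def hurwitzW (a b c : ℤ) : ℚ :=
  if a = b ∧ b = c then 3 else if b = 0 ∧ a = c then 2 else 1

/-- The Hurwitz class number `H(n)`: `H(0) = -1/12`, and for `n > 0` the weighted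
count of reduced forms of discriminant `-n` (automatically `0` for `n ≡ 1, 2 mod 4`). -/
noncomputable def hurwitz (n : ℕ) : ℚ :=
  if n = 0 then -(1 / 12)
  else
    ∑ a ∈ Finset.Icc (1 : ℤ) (n : ℤ), ∑ b ∈ Finset.Icc (-(n : ℤ)) (n : ℤ),
      ∑ c ∈ Finset.Icc (1 : ℤ) ((n : ℤ) ^ 2 + (n : ℤ)),
        if b ^ 2 - 4 * a * c = -(n : ℤ) ∧ |b| ≤ a ∧ a ≤ c ∧ ((|b| = a ∨ a = c) → 0 ≤ b)
        then (hurwitzW a b c)⁻¹ else 0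

/-- `L(0, χ_D) = -(1/|D|) Σ_{a=1}^{|D|} (D/a) a` for a fundamental discriminant `D < 0`. -/
noncomputable def Lval (D : ℤ) : ℚ :=
  -(1 / (D.natAbs : ℚ)) * ∑ a ∈ Finset.Icc 1 D.natAbs, (kron D a : ℚ) * (a : ℚ)

/-- `L_m(0, χ_D) = L(0,χ_D) ∏_{p ∣ m} (1 - (D/p))`. -/
noncomputable def LvalM (m : ℕ) (D : ℤ) : ℚ :=
  Lval D * ∏ p ∈ m.primeFactors, (1 - (kron D p : ℚ))

/-- `σ_{m,N,1}(r) = Σ_{d ∣ r, gcd(d,m)=1, gcd(r/d, N/m)=1} d`. -/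
def sigmaMN (m N r : ℕ) : ℕ :=
  ∑ d ∈ r.divisors, if Nat.gcd d m = 1 ∧ Nat.gcd (r / d) (N / m) = 1 then d else 0

/-- The Pei–Wang generalized Hurwitz class number `H_{m,N}(n)`. -/
noncomputable def HPW (m N n : ℕ) : ℚ :=
  if n = 0 then
    if m = N then -(1 / 12) * ∏ p ∈ N.primeFactors, (1 - (p : ℚ)) else 0
  else if n % 4 = 0 ∨ n % 4 = 3 then
    LvalM m (Dn n) *
      (∏ p ∈ (N / m).primeFactors,
        (1 - (kron (Dn n) p : ℚ) / (p : ℚ)) / (1 - ((p : ℚ)⁻¹) ^ 2)) *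
      ∑ a ∈ (fn n).divisors,
        if Nat.gcd a N = 1 then
          (ArithmeticFunction.moebius a : ℚ) * (kron (Dn n) a : ℚ) *
            (sigmaMN m N (fn n / a) : ℚ)
        else 0
  else 0

/-- The Li–Skoruppa–Zhou modified class number `H^{(N₁,N₂)}(n)`. -/
noncomputable def HLSZ (N₁ N₂ n : ℕ) : ℚ :=
  if n = 0 then
    -(1 / 12) * (∏ p ∈ N₁.primeFactors, (1 - (p : ℚ))) *
      ∏ p ∈ N₂.primeFactors, ((p : ℚ) + 1)
  else if n % 4 = 0 ∨ n % 4 = 3 then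
    hurwitz (n / (∏ p ∈ (N₁ * N₂).primeFactors, ppart (fn n) p) ^ 2) *
      (∏ p ∈ N₁.primeFactors, (1 - (kron (Dn n) p : ℚ))) *
      ∏ p ∈ N₂.primeFactors,
        ((2 * (p : ℚ) * (ppart (fn n) p : ℚ) - (p : ℚ) - 1 -
            (kron (Dn n) p : ℚ) * (2 * (ppart (fn n) p : ℚ) - (p : ℚ) - 1)) /
          ((p : ℚ) - 1))
  else 0

/-- Number of distinct prime divisors, `ω(N)`. -/
def omegaN (N : ℕ) : ℕ := N.primeFactors.card

/-- The local factor `A_p(n)`, for `-n = D·f²`. -/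
noncomputable def locA (D : ℤ) (f p : ℕ) : ℚ :=
  (ppart f p : ℚ) * (1 - (kron D p : ℚ) / (p : ℚ)) / (1 - ((p : ℚ)⁻¹) ^ 2)

/-- The local factor `B_p(n)`, for `-n = D·f²`. -/
noncomputable def locB (D : ℤ) (f p : ℕ) : ℚ :=
  (2 * (p : ℚ) * (ppart f p : ℚ) - (p : ℚ) - 1 -
      (kron D p : ℚ) * (2 * (ppart f p : ℚ) - (p : ℚ) - 1)) / ((p : ℚ) - 1)

/-- The local factor `C_p(n)`, for `-n = D·f²`. -/
noncomputable def locC (D : ℤ) (p : ℕ) : ℚ := 1 - (kron D p : ℚ)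

/-- The local factor `D_p(n) = σ₁(f_p) - σ₁(f_p/p)·(D/p)`, for `-n = D·f²`. -/
noncomputable def locD (D : ℤ) (f p : ℕ) : ℚ :=
  (ArithmeticFunction.sigma 1 (ppart f p) : ℚ) -
    (ArithmeticFunction.sigma 1 (ppart f p / p) : ℚ) * (kron D p : ℚ)

/-- The character local factor `D_p(ℓ,n) = σ₁(f_p) - σ₁(f_p/p)·(D_{ℓ,n}/p)·(p/ℓ)`. -/
noncomputable def locDchar (l : ℕ) (D : ℤ) (f p : ℕ) : ℚ :=
  (ArithmeticFunction.sigma 1 (ppart f p) : ℚ) -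
    (ArithmeticFunction.sigma 1 (ppart f p / p) : ℚ) * (kron D p : ℚ) *
      (jacobiSym (p : ℤ) l : ℚ)

/-- The Pei–Wang generalized class number `H(ℓ, m, N; n)` with character `χ_ℓ`. -/
noncomputable def HPWchar (l m N n : ℕ) : ℚ := by
  classical
  exact
    if n = 0 then
      if m = N then -(1 / 12) * ∏ p ∈ N.primeFactors, (1 - (p : ℚ)) else 0
    else if (∃ q : ℤ × ℕ, IsFundDisc q.1 ∧ 1 ≤ q.2 ∧
            -(((-1 : ℤ) ^ ((l - 1) / 2)) * (n : ℤ)) = q.1 * (q.2 : ℤ) ^ 2) ∧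
        (∃ q : ℤ × ℕ, IsFundDisc q.1 ∧ 1 ≤ q.2 ∧
            -((l : ℤ) * (n : ℤ)) = q.1 * (q.2 : ℤ) ^ 2) then
      LvalM m (fdpair (-((l : ℤ) * (n : ℤ)))).1 *
        (∏ p ∈ (N / m).primeFactors,
          (1 - (kron (fdpair (-((l : ℤ) * (n : ℤ)))).1 p : ℚ) / (p : ℚ)) /
            (1 - ((p : ℚ)⁻¹) ^ 2)) *
        ((Int.gcd (l : ℤ) (fdpair (-(((-1 : ℤ) ^ ((l - 1) / 2)) * (n : ℤ)))).1 : ℚ) /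
          (Nat.gcd (Int.gcd (l : ℤ) (fdpair (-(((-1 : ℤ) ^ ((l - 1) / 2)) * (n : ℤ)))).1) m : ℚ)) *
        ∑ a ∈ (fdpair (-(((-1 : ℤ) ^ ((l - 1) / 2)) * (n : ℤ)))).2.divisors,
          if Nat.gcd a N = 1 then
            (ArithmeticFunction.moebius a : ℚ) *
              (kron (fdpair (-(((-1 : ℤ) ^ ((l - 1) / 2)) * (n : ℤ)))).1 a : ℚ) *
              (jacobiSym (a : ℤ) l : ℚ) *
              (sigmaMN m N ((fdpair (-(((-1 : ℤ) ^ ((l - 1) / 2)) * (n : ℤ)))).2 / a) : ℚ)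
          else 0
    else 0

lemma sq_uniq (s1 s2 : ℤ) (f1 f2 : ℕ) (hs1 : Squarefree s1) (hs2 : Squarefree s2)
    (hf1 : f1 ≠ 0) (hf2 : f2 ≠ 0) (h : s1 * (f1 : ℤ)^2 = s2 * (f2 : ℤ)^2) :
    s1 = s2 ∧ f1 = f2 := by
  have hs1n : s1 ≠ 0 := hs1.ne_zero
  have hs2n : s2 ≠ 0 := hs2.ne_zero
  have hsa1 : Squarefree s1.natAbs := Int.squarefree_natAbs.mpr hs1
  have hsa2 : Squarefree s2.natAbs := Int.squarefree_natAbs.mpr hs2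
  have hnat : s1.natAbs * f1^2 = s2.natAbs * f2^2 := by
    have := congrArg Int.natAbs h
    simpa [Int.natAbs_mul, Int.natAbs_pow] using this
  have hfe : f1 = f2 := by
    refine Nat.eq_of_factorization_eq hf1 hf2 (fun p => ?_)
    have h1 := congrArg (fun x => x.factorization p) hnat
    simp only [Nat.factorization_mul (Int.natAbs_ne_zero.mpr hs1n) (pow_ne_zero 2 hf1),
      Nat.factorization_mul (Int.natAbs_ne_zero.mpr hs2n) (pow_ne_zero 2 hf2),
      Nat.factorization_pow, Finsupp.add_apply, Finsupp.smul_apply, smul_eq_mul] at h1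
    have l1 := hsa1.natFactorization_le_one p
    have l2 := hsa2.natFactorization_le_one p
    omega
  subst hfe
  refine ⟨?_, rfl⟩
  exact mul_right_cancel₀ (pow_ne_zero 2 (Int.natCast_ne_zero.mpr hf1)) h

lemma fund_uniq (D1 D2 : ℤ) (f1 f2 : ℕ) (h1 : IsFundDisc D1) (h2 : IsFundDisc D2)
    (hf1 : 1 ≤ f1) (hf2 : 1 ≤ f2) (heq : D1 * (f1 : ℤ)^2 = D2 * (f2 : ℤ)^2) :
    D1 = D2 ∧ f1 = f2 := by
  have norm : ∀ D : ℤ, IsFundDisc D →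
      (D % 4 = 1 ∧ Squarefree D) ∨ ∃ k : ℤ, D = 4 * k ∧ (k % 4 = 2 ∨ k % 4 = 3) ∧ Squarefree k := by
    rintro D (rfl | h | h)
    · exact Or.inl ⟨by decide, squarefree_one⟩
    · exact Or.inl h
    · exact Or.inr h
  have hf1n : f1 ≠ 0 := Nat.one_le_iff_ne_zero.mp hf1
  have hf2n : f2 ≠ 0 := Nat.one_le_iff_ne_zero.mp hf2
  rcases norm D1 h1 with ⟨m1, s1⟩ | ⟨k1, rfl, m1, s1⟩ <;>
    rcases norm D2 h2 with ⟨m2, s2⟩ | ⟨k2, rfl, m2, s2⟩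
  · exact sq_uniq D1 D2 f1 f2 s1 s2 hf1n hf2n heq
  · exfalso
    have heq' : D1 * (f1 : ℤ)^2 = k2 * ((2 * f2 : ℕ) : ℤ)^2 := by push_cast; push_cast at heq; ring_nf; ring_nf at heq; linarith
    obtain ⟨hD, -⟩ := sq_uniq D1 k2 f1 (2 * f2) s1 s2 hf1n (by omega) heq'
    omega
  · exfalso
    have heq' : D2 * (f2 : ℤ)^2 = k1 * ((2 * f1 : ℕ) : ℤ)^2 := by push_cast; push_cast at heq; ring_nf; ring_nf at heq; linarith
    obtain ⟨hD, -⟩ := sq_uniq D2 k1 f2 (2 * f1) s2 s1 hf2n (by omega) heq'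
    omega
  · have heq' : k1 * (f1 : ℤ)^2 = k2 * (f2 : ℤ)^2 := by linarith
    obtain ⟨hD, hfe⟩ := sq_uniq k1 k2 f1 f2 s1 s2 hf1n hf2n heq'
    exact ⟨by rw [hD], hfe⟩

lemma fdpair_eq (a : ℤ) (D : ℤ) (f : ℕ) (hD : IsFundDisc D) (hf : 1 ≤ f)
    (ha : a = D * (f : ℤ)^2) : fdpair a = (D, f) := by
  have hex : ∃ p : ℤ × ℕ, IsFundDisc p.1 ∧ 1 ≤ p.2 ∧ a = p.1 * (p.2 : ℤ) ^ 2 :=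
    ⟨(D, f), hD, hf, ha⟩
  rw [fdpair, dif_pos hex]
  obtain ⟨h1, h2, h3⟩ := hex.choose_spec
  obtain ⟨hD', hf'⟩ := fund_uniq _ D _ f h1 hD h2 hf (h3 ▸ ha)
  exact Prod.ext hD' hf'

lemma kron_one (D : ℤ) : kron D 1 = 1 := by simp [kron]

lemma kron_prime (D : ℤ) {p : ℕ} (hp : p.Prime) : kron D p = kronP D p := by
  simp [kron, hp.factorization, Finsupp.prod_single_index]

lemma kron_mul (D : ℤ) {a b : ℕ} (ha : a ≠ 0) (hb : b ≠ 0) :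
    kron D (a * b) = kron D a * kron D b := by
  unfold kron
  rw [Nat.factorization_mul ha hb]
  exact Finsupp.prod_add_index' (fun p => pow_zero _) (fun p k1 k2 => pow_add _ _ _)

open ArithmeticFunction

noncomputable def gfun (D : ℤ) (l N : ℕ) : ArithmeticFunction ℚ :=
  ⟨fun a => if Nat.gcd a N = 1 then (moebius a : ℚ) * (kron D a : ℚ) * (jacobiSym (a : ℤ) l : ℚ) else 0,
   by simp⟩

noncomputable def ufun (m : ℕ) : ArithmeticFunction ℚ :=
  ⟨fun d => if Nat.gcd d m = 1 then (d : ℚ) else 0, by simp⟩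

noncomputable def vfun (m N : ℕ) : ArithmeticFunction ℚ :=
  ⟨fun e => if e ≠ 0 ∧ Nat.gcd e (N / m) = 1 then 1 else 0, by simp⟩

lemma gfun_apply (D : ℤ) (l N a : ℕ) :
    gfun D l N a = if Nat.gcd a N = 1 then (moebius a : ℚ) * (kron D a : ℚ) * (jacobiSym (a : ℤ) l : ℚ) else 0 := rfl

lemma gfun_mult (D : ℤ) (l N : ℕ) : (gfun D l N).IsMultiplicative := by
  constructor
  · simp [gfun_apply, kron_one]
  · intro a b hab
    rcases eq_or_ne a 0 with rfl | ha
    · obtain rfl := (Nat.coprime_zero_left _).mp hab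
      simp [gfun_apply, kron_one]
    rcases eq_or_ne b 0 with rfl | hb
    · obtain rfl := (Nat.coprime_zero_right _).mp hab
      simp [gfun_apply, kron_one]
    have hiff : Nat.gcd (a * b) N = 1 ↔ Nat.gcd a N = 1 ∧ Nat.gcd b N = 1 :=
      Nat.coprime_mul_iff_left
    simp only [gfun_apply, hiff]
    by_cases h1 : Nat.gcd a N = 1 <;> by_cases h2 : Nat.gcd b N = 1 <;>
      simp [h1, h2]
    rw [isMultiplicative_moebius.map_mul_of_coprime hab, kron_mul D ha hb,
      jacobiSym.mul_left]
    push_cast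
    ring

lemma ufun_apply (m d : ℕ) : ufun m d = if Nat.gcd d m = 1 then (d : ℚ) else 0 := rfl

lemma ufun_mult (m : ℕ) : (ufun m).IsMultiplicative := by
  constructor
  · simp [ufun_apply]
  · intro a b hab
    have hiff : Nat.gcd (a * b) m = 1 ↔ Nat.gcd a m = 1 ∧ Nat.gcd b m = 1 :=
      Nat.coprime_mul_iff_left
    simp only [ufun_apply, hiff]
    by_cases h1 : Nat.gcd a m = 1 <;> by_cases h2 : Nat.gcd b m = 1 <;>
      simp [h1, h2]

lemma vfun_apply (m N e : ℕ) :
    vfun m N e = if e ≠ 0 ∧ Nat.gcd e (N / m) = 1 then 1 else 0 := rfl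

lemma vfun_mult (m N : ℕ) : (vfun m N).IsMultiplicative := by
  constructor
  · simp [vfun_apply]
  · intro a b hab
    have hiff : Nat.gcd (a * b) (N / m) = 1 ↔
        Nat.gcd a (N / m) = 1 ∧ Nat.gcd b (N / m) = 1 := Nat.coprime_mul_iff_left
    have hco : (a * b ≠ 0 ∧ Nat.gcd (a * b) (N / m) = 1) ↔
        ((a ≠ 0 ∧ Nat.gcd a (N / m) = 1) ∧ (b ≠ 0 ∧ Nat.gcd b (N / m) = 1)) := by
      rw [hiff, mul_ne_zero_iff]; tauto
    simp only [vfun_apply, hco]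
    by_cases h1 : a ≠ 0 ∧ Nat.gcd a (N / m) = 1 <;>
      by_cases h2 : b ≠ 0 ∧ Nat.gcd b (N / m) = 1 <;> simp [h1, h2]

noncomputable def hfun (m N : ℕ) : ArithmeticFunction ℚ := ufun m * vfun m N

lemma hfun_mult (m N : ℕ) : (hfun m N).IsMultiplicative :=
  (ufun_mult m).mul (vfun_mult m N)

lemma hfun_apply (m N r : ℕ) (hr : r ≠ 0) : hfun m N r = (sigmaMN m N r : ℚ) := by
  rw [hfun, mul_apply, Nat.sum_divisorsAntidiagonal (fun a b => ufun m a * vfun m N b)]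
  rw [sigmaMN, Nat.cast_sum]
  refine Finset.sum_congr rfl (fun d hd => ?_)
  obtain ⟨hdvd, -⟩ := Nat.mem_divisors.mp hd
  have hq : r / d ≠ 0 := by
    have := Nat.div_pos (Nat.le_of_dvd (Nat.pos_of_ne_zero hr) hdvd)
      (Nat.pos_of_ne_zero (by rintro rfl; simp at hdvd; exact hr hdvd))
    omega
  rw [ufun_apply, vfun_apply]
  by_cases h1 : Nat.gcd d m = 1 <;> by_cases h2 : Nat.gcd (r / d) (N / m) = 1 <;>
    simp [h1, h2, hq]

lemma hfun_pp_m {p : ℕ} (hp : p.Prime) {m N : ℕ} (hm : m ∣ N) (hsf : Squarefree N)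
    (hpm : p ∣ m) (i : ℕ) : hfun m N (p ^ i) = 1 := by
  have hpNm : ¬ p ∣ (N / m) := by
    intro hdvd
    have : p * p ∣ N := by
      have := mul_dvd_mul hdvd hpm
      rwa [Nat.div_mul_cancel hm] at this
    exact hp.not_isUnit (hsf p this)
  rw [hfun, mul_apply, Nat.sum_divisorsAntidiagonal (fun a b => ufun m a * vfun m N b),
    Nat.sum_divisors_prime_pow hp]
  rw [Finset.sum_eq_single 0]
  · rw [pow_zero, Nat.div_one, ufun_apply, vfun_apply]
    have : Nat.gcd (p ^ i) (N / m) = 1 := (hp.coprime_iff_not_dvd.mpr hpNm).pow_left i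
    simp [this, pow_ne_zero i hp.ne_zero, hp.pos.ne']
  · intro j _ hj
    have : ¬ Nat.gcd (p ^ j) m = 1 := by
      intro h
      have hpg : p ∣ Nat.gcd (p ^ j) m := Nat.dvd_gcd (dvd_pow_self p hj) hpm
      rw [h] at hpg
      exact hp.ne_one (Nat.dvd_one.mp hpg)
    rw [ufun_apply, if_neg this, zero_mul]
  · intro h
    exact absurd (Finset.mem_range.mpr (Nat.succ_pos i)) h

lemma hfun_pp_Nm {p : ℕ} (hp : p.Prime) {m N : ℕ} (hm : m ∣ N) (hpN : p ∣ N)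
    (hpm : ¬ p ∣ m) (i : ℕ) : hfun m N (p ^ i) = (p : ℚ) ^ i := by
  have hpNm : p ∣ (N / m) := by
    have hN' : m * (N / m) = N := Nat.mul_div_cancel' hm
    rcases (hp.dvd_mul.mp (hN' ▸ hpN)) with h | h
    · exact absurd h hpm
    · exact h
  rw [hfun, mul_apply, Nat.sum_divisorsAntidiagonal (fun a b => ufun m a * vfun m N b),
    Nat.sum_divisors_prime_pow hp]
  rw [Finset.sum_eq_single i]
  · have hdiv : p ^ i / p ^ i = 1 := Nat.div_self (pow_pos hp.pos i)
    rw [hdiv, ufun_apply, vfun_apply]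
    have : Nat.gcd (p ^ i) m = 1 := (hp.coprime_iff_not_dvd.mpr hpm).pow_left i
    simp [this]
  · intro j hj hji
    have hjle : j ≤ i := Nat.lt_succ_iff.mp (Finset.mem_range.mp hj)
    have hdiv : p ^ i / p ^ j = p ^ (i - j) := Nat.pow_div hjle hp.pos
    have hij : i - j ≠ 0 := by omega
    have : ¬ Nat.gcd (p ^ (i - j)) (N / m) = 1 := by
      intro h
      have hpg : p ∣ Nat.gcd (p ^ (i - j)) (N / m) :=
        Nat.dvd_gcd (dvd_pow_self p hij) hpNm
      rw [h] at hpg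
      exact hp.ne_one (Nat.dvd_one.mp hpg)
    rw [hdiv, vfun_apply, if_neg (by tauto), mul_zero]
  · intro h
    exact absurd (Finset.mem_range.mpr (Nat.lt_succ_self i)) h

lemma hfun_pp_nN {p : ℕ} (hp : p.Prime) {m N : ℕ} (hm : m ∣ N) (hpN : ¬ p ∣ N)
    (i : ℕ) : hfun m N (p ^ i) = ((ArithmeticFunction.sigma 1 (p ^ i) : ℕ) : ℚ) := by
  have hpm : ¬ p ∣ m := fun h => hpN (h.trans hm)
  have hpNm : ¬ p ∣ (N / m) := fun h => hpN (h.trans (Nat.div_dvd_of_dvd hm))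
  rw [hfun, mul_apply, Nat.sum_divisorsAntidiagonal (fun a b => ufun m a * vfun m N b),
    Nat.sum_divisors_prime_pow hp, sigma_one_apply, Nat.sum_divisors_prime_pow hp]
  push_cast
  refine Finset.sum_congr rfl (fun j hj => ?_)
  have hjle : j ≤ i := Nat.lt_succ_iff.mp (Finset.mem_range.mp hj)
  have hdiv : p ^ i / p ^ j = p ^ (i - j) := Nat.pow_div hjle hp.pos
  rw [hdiv, ufun_apply, vfun_apply]
  have h1 : Nat.gcd (p ^ j) m = 1 := (hp.coprime_iff_not_dvd.mpr hpm).pow_left j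
  have h2 : Nat.gcd (p ^ (i - j)) (N / m) = 1 :=
    (hp.coprime_iff_not_dvd.mpr hpNm).pow_left _
  simp [h1, h2, pow_ne_zero _ hp.ne_zero, hp.pos.ne']

lemma Fpp (D : ℤ) (l m N : ℕ) {p : ℕ} (hp : p.Prime) {k : ℕ} (hk : k ≠ 0) :
    (gfun D l N * hfun m N) (p ^ k) =
      hfun m N (p ^ k) + gfun D l N p * hfun m N (p ^ (k - 1)) := by
  rw [mul_apply, Nat.sum_divisorsAntidiagonal (fun a b => gfun D l N a * hfun m N b),
    Nat.sum_divisors_prime_pow hp]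
  have hsub : ({0, 1} : Finset ℕ) ⊆ Finset.range (k + 1) := by
    intro x hx
    simp only [Finset.mem_insert, Finset.mem_singleton] at hx
    rcases hx with rfl | rfl <;> simp [Finset.mem_range] <;> omega
  rw [← Finset.sum_subset hsub]
  · rw [Finset.sum_insert (by simp), Finset.sum_singleton]
    have hg1 : gfun D l N 1 = 1 := (gfun_mult D l N).1
    have e1 : p ^ k / p = p ^ (k - 1) := by
      have := Nat.pow_div (x := p) (show 1 ≤ k by omega) hp.pos
      simpa using this
    rw [pow_zero, pow_one, e1, hg1, one_mul, Nat.div_one]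
  · intro j hj hj2
    simp only [Finset.mem_insert, Finset.mem_singleton] at hj2
    push_neg at hj2
    have : moebius (p ^ j) = 0 := by
      rw [moebius_apply_prime_pow hp hj2.1]
      exact if_neg hj2.2
    rw [gfun_apply]
    by_cases h : Nat.gcd (p ^ j) N = 1 <;> simp [h, this]

lemma sum_eval (D : ℤ) (l m N f : ℕ) (hN : N ≠ 0) (hsf : Squarefree N) (hm : m ∣ N)
    (hf : f ≠ 0) :
    (∑ a ∈ f.divisors, if Nat.gcd a N = 1 then
        (moebius a : ℚ) * (kron D a : ℚ) * (jacobiSym (a : ℤ) l : ℚ) *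
          (sigmaMN m N (f / a) : ℚ)
      else 0) =
    (∏ p ∈ f.primeFactors.filter fun p => ¬ p ∣ N,
        ((sigma 1 (p ^ f.factorization p) : ℚ) -
          (sigma 1 (p ^ f.factorization p / p) : ℚ) * (kron D p : ℚ) *
            (jacobiSym (p : ℤ) l : ℚ)))
      * ∏ p ∈ (N / m).primeFactors, (p : ℚ) ^ f.factorization p := by
  have hL : (∑ a ∈ f.divisors, if Nat.gcd a N = 1 then
        (moebius a : ℚ) * (kron D a : ℚ) * (jacobiSym (a : ℤ) l : ℚ) *
          (sigmaMN m N (f / a) : ℚ)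
      else 0) = (gfun D l N * hfun m N) f := by
    rw [mul_apply, Nat.sum_divisorsAntidiagonal (fun a b => gfun D l N a * hfun m N b)]
    refine Finset.sum_congr rfl (fun a ha => ?_)
    obtain ⟨haf, -⟩ := Nat.mem_divisors.mp ha
    have hfa : f / a ≠ 0 := by
      have ha0 : a ≠ 0 := by rintro rfl; exact hf (Nat.eq_zero_of_zero_dvd haf)
      have := Nat.div_pos (Nat.le_of_dvd (Nat.pos_of_ne_zero hf) haf) (Nat.pos_of_ne_zero ha0)
      omega
    rw [gfun_apply, hfun_apply m N _ hfa]
    by_cases h : Nat.gcd a N = 1 <;> simp [h]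
  rw [hL, (gfun_mult D l N).mul (hfun_mult m N) |>.multiplicative_factorization _ hf,
    Finsupp.prod, Nat.support_factorization]
  rw [← Finset.prod_filter_mul_prod_filter_not f.primeFactors (fun p => ¬ p ∣ N)]
  congr 1
  · refine Finset.prod_congr rfl (fun p hp => ?_)
    rw [Finset.mem_filter] at hp
    obtain ⟨hpf, hpN⟩ := hp
    have hprime : p.Prime := Nat.prime_of_mem_primeFactors hpf
    have hk : f.factorization p ≠ 0 := by
      have := Nat.Prime.factorization_pos_of_dvd hprime hf (Nat.dvd_of_mem_primeFactors hpf)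
      omega
    rw [Fpp D l m N hprime hk, hfun_pp_nN hprime hm hpN, hfun_pp_nN hprime hm hpN,
      gfun_apply, if_pos (hprime.coprime_iff_not_dvd.mpr hpN),
      moebius_apply_prime hprime]
    have e1 : p ^ f.factorization p / p = p ^ (f.factorization p - 1) := by
      have := Nat.pow_div (x := p) (show 1 ≤ f.factorization p by omega) hprime.pos
      simpa using this
    rw [e1]
    push_cast
    ring
  · have step1 : ∏ p ∈ f.primeFactors.filter (fun p => ¬¬ p ∣ N),
        (gfun D l N * hfun m N) (p ^ f.factorization p) =
        ∏ p ∈ f.primeFactors.filter (fun p => p ∣ N ∧ ¬ p ∣ m),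
          (p : ℚ) ^ f.factorization p := by
      rw [Finset.prod_filter, Finset.prod_filter]
      refine Finset.prod_congr rfl (fun p hpf => ?_)
      have hprime : p.Prime := Nat.prime_of_mem_primeFactors hpf
      have hk : f.factorization p ≠ 0 := by
        have := Nat.Prime.factorization_pos_of_dvd hprime hf (Nat.dvd_of_mem_primeFactors hpf)
        omega
      by_cases hpN : p ∣ N
      · have hg : gfun D l N p = 0 := by
          rw [gfun_apply, if_neg]
          rw [Nat.gcd_eq_left hpN]
          exact hprime.ne_one
        rw [if_pos (not_not.mpr hpN)]
        rw [Fpp D l m N hprime hk, hg, zero_mul, add_zero]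
        by_cases hpm : p ∣ m
        · rw [hfun_pp_m hprime hm hsf hpm, if_neg (by tauto)]
        · rw [hfun_pp_Nm hprime hm hpN hpm, if_pos ⟨hpN, hpm⟩]
      · rw [if_neg (by tauto), if_neg (by tauto)]
    rw [step1]
    refine Finset.prod_subset ?_ ?_
    · intro p hp
      rw [Finset.mem_filter] at hp
      obtain ⟨hpf, hpN, hpm⟩ := hp
      have hprime : p.Prime := Nat.prime_of_mem_primeFactors hpf
      have hNm0 : N / m ≠ 0 := by
        have := Nat.div_pos (Nat.le_of_dvd (Nat.pos_of_ne_zero hN) hm)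
          (Nat.pos_of_ne_zero (by rintro rfl; simp at hm; exact hN hm))
        omega
      have hpNm : p ∣ N / m := by
        have hN' : m * (N / m) = N := Nat.mul_div_cancel' hm
        rcases hprime.dvd_mul.mp (hN' ▸ hpN) with h | h
        · exact absurd h hpm
        · exact h
      exact Nat.mem_primeFactors.mpr ⟨hprime, hpNm, hNm0⟩
    · intro p hpB hpA
      rw [Nat.mem_primeFactors] at hpB
      obtain ⟨hprime, hpNm, hNm0⟩ := hpB
      have hpN : p ∣ N := hpNm.trans (Nat.div_dvd_of_dvd hm)
      have hpm : ¬ p ∣ m := by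
        intro hpm
        have : p * p ∣ N := by
          have := mul_dvd_mul hpNm hpm
          rwa [Nat.div_mul_cancel hm] at this
        exact hprime.not_isUnit (hsf p this)
      have hpf : ¬ p ∣ f := by
        intro hpf
        exact hpA (Finset.mem_filter.mpr ⟨Nat.mem_primeFactors.mpr ⟨hprime, hpf, hf⟩, hpN, hpm⟩)
      rw [Nat.factorization_eq_zero_of_not_dvd hpf, pow_zero]

/-- Local expression for the Pei–Wang class number with character. -/
theorem PWchar_local (N l m : ℕ) (hN : 0 < N) (hodd : Odd N) (hsf : Squarefree N)
    (hl : l ∣ N) (hl1 : 1 < l) (hm : m ∣ N) (n : ℕ) (hn : 0 < n)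
    (D D' : ℤ) (f f' : ℕ) (hD : IsFundDisc D) (hD' : IsFundDisc D')
    (hf : 1 ≤ f) (hf' : 1 ≤ f')
    (hDf : -(((-1 : ℤ) ^ ((l - 1) / 2)) * (n : ℤ)) = D * (f : ℤ) ^ 2)
    (hDf' : -((l : ℤ) * (n : ℤ)) = D' * (f' : ℤ) ^ 2) :
    HPWchar l m N n =
      Lval D' * (∏ p ∈ f.primeFactors.filter fun p => ¬p ∣ N, locDchar l D f p) *
        (∏ p ∈ m.primeFactors, locC D' p) *
        (∏ p ∈ (N / m).primeFactors, locA D' f p) *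
        ((Int.gcd (l : ℤ) D : ℚ) / (Nat.gcd (Int.gcd (l : ℤ) D) m : ℚ)) := by
  classical
  have hn0 : n ≠ 0 := hn.ne'
  have hNne : N ≠ 0 := hN.ne'
  have hfne : f ≠ 0 := by omega
  have hfd1 : fdpair (-(((-1 : ℤ) ^ ((l - 1) / 2)) * (n : ℤ))) = (D, f) :=
    fdpair_eq _ D f hD hf hDf
  have hfd2 : fdpair (-((l : ℤ) * (n : ℤ))) = (D', f') :=
    fdpair_eq _ D' f' hD' hf' hDf'
  have hex : (∃ q : ℤ × ℕ, IsFundDisc q.1 ∧ 1 ≤ q.2 ∧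
        -(((-1 : ℤ) ^ ((l - 1) / 2)) * (n : ℤ)) = q.1 * (q.2 : ℤ) ^ 2) ∧
      (∃ q : ℤ × ℕ, IsFundDisc q.1 ∧ 1 ≤ q.2 ∧
        -((l : ℤ) * (n : ℤ)) = q.1 * (q.2 : ℤ) ^ 2) :=
    ⟨⟨(D, f), hD, hf, hDf⟩, ⟨(D', f'), hD', hf', hDf'⟩⟩
  rw [HPWchar, if_neg hn0, if_pos hex]
  simp only [hfd1, hfd2]
  rw [sum_eval D l m N f hNne hsf hm hfne]
  have hDchar : (∏ p ∈ f.primeFactors.filter fun p => ¬ p ∣ N,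
      ((ArithmeticFunction.sigma 1 (p ^ f.factorization p) : ℚ) -
        (ArithmeticFunction.sigma 1 (p ^ f.factorization p / p) : ℚ) * (kron D p : ℚ) *
          (jacobiSym (p : ℤ) l : ℚ)))
      = ∏ p ∈ f.primeFactors.filter fun p => ¬ p ∣ N, locDchar l D f p := by
    refine Finset.prod_congr rfl (fun p hp => ?_)
    rw [locDchar, ppart]
  have hA : (∏ p ∈ (N / m).primeFactors, locA D' f p) =
      (∏ p ∈ (N / m).primeFactors,
        (1 - (kron D' p : ℚ) / (p : ℚ)) / (1 - ((p : ℚ)⁻¹) ^ 2)) *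
      ∏ p ∈ (N / m).primeFactors, (p : ℚ) ^ f.factorization p := by
    rw [← Finset.prod_mul_distrib]
    refine Finset.prod_congr rfl (fun p hp => ?_)
    rw [locA, ppart]
    push_cast
    ring
  rw [hDchar, hA, LvalM]
  have hC : (∏ p ∈ m.primeFactors, (1 - (kron D' p : ℚ))) =
      ∏ p ∈ m.primeFactors, locC D' p := by
    refine Finset.prod_congr rfl (fun p hp => ?_)
    rw [locC]
  rw [hC]
  ring
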